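/- Let S be a symmetric k×k matrix with strictly positive entries and no two identical columns. Let R be a k×k matrix with nonnegative entries summing to 1 such that every column of R is nonzero and such that D_σ R is not a diagonal matrix for any k×k permutation matrix D_σ. Then G_S(Diag(Rᵀ1)) − G_S(R) > 0, where G_S(R) = Σ_{1≤a,b≤k} [RSRᵀ]_{ab} log( [RSRᵀ]_{ab} / ([R1]_a [R1]_b) ) with the convention that terms with [RSRᵀ]_{ab} = 0 are 0. -/

import Mathlib

open Finset Filter
open scoped Classical BigOperators Topology

noncomputable section

namespace SBM

variable {n k : ℕ}

/-- Number of nodes with label `a`. -/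
def nCount (z : Fin n → Fin k) (a : Fin k) : ℕ :=
  (Finset.univ.filter fun i => z i = a).card

/-- `n_{ab}(z)`. -/
def nab (z : Fin n → Fin k) (a b : Fin k) : ℝ :=
  if a = b then (nCount z a : ℝ) * ((nCount z a : ℝ) - 1)
  else (nCount z a : ℝ) * (nCount z b : ℝ)

/-- `o_{ab}(z)`: number of (ordered) edges between communities `a` and `b`. -/
def oab (A : Fin n → Fin n → Bool) (z : Fin n → Fin k) (a b : Fin k) : ℝ :=
  ∑ i : Fin n, ∑ j : Fin n, if z i = a ∧ z j = b ∧ A i j = true then (1 : ℝ) else 0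

/-- `τ(x) = x log x + (1-x) log(1-x)` (with `Real.log 0 = 0`, so `0 log 0 = 0`). -/
def tau (x : ℝ) : ℝ := x * Real.log x + (1 - x) * Real.log (1 - x)

/-- Maximum likelihood modularity. -/
def QML (A : Fin n → Fin n → Bool) (z : Fin n → Fin k) : ℝ :=
  (1 / (2 * (n : ℝ) ^ 2)) *
    ∑ a : Fin k, ∑ b : Fin k, nab z a b * tau (oab A z a b / nab z a b)

/-- The Beta function. -/
def Beta (x y : ℝ) : ℝ := Real.Gamma x * Real.Gamma y / Real.Gamma (x + y)

def otilde (A : Fin n → Fin n → Bool) (z : Fin n → Fin k) (a b : Fin k) : ℝ :=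
  if a = b then oab A z a b / 2 else oab A z a b

def ntilde (z : Fin n → Fin k) (a b : Fin k) : ℝ :=
  if a = b then nab z a b / 2 else nab z a b

/-- Integrated conditional likelihood modularity. -/
def QICL (A : Fin n → Fin n → Bool) (z : Fin n → Fin k) : ℝ :=
  (1 / (n : ℝ) ^ 2) *
    ∑ p ∈ Finset.univ.filter (fun p : Fin k × Fin k => p.1 ≤ p.2),
      Real.log (Beta (otilde A z p.1 p.2 + 1 / 2)
          (ntilde z p.1 p.2 - otilde A z p.1 p.2 + 1 / 2) / Beta (1 / 2) (1 / 2))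

/-- The adjacency matrix is symmetric with zero diagonal. -/
def ValidAdj (A : Fin n → Fin n → Bool) : Prop :=
  (∀ i j, A i j = A j i) ∧ ∀ i, A i i = false

/-- Density of the conditional SBM edge model given the labels `z`:
independent Bernoulli(`ρ S (z i) (z j)`) edges for `i < j`. -/
def edgeDensity (ρ : ℝ) (S : Matrix (Fin k) (Fin k) ℝ) (z : Fin n → Fin k)
    (A : Fin n → Fin n → Bool) : ℝ :=
  ∏ p ∈ Finset.univ.filter (fun p : Fin n × Fin n => p.1 < p.2),
    (if A p.1 p.2 then ρ * S (z p.1) (z p.2) else 1 - ρ * S (z p.1) (z p.2))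

/-- Conditional probability of an event on the adjacency matrix, given labels `z`. -/
def condProb (ρ : ℝ) (S : Matrix (Fin k) (Fin k) ℝ) (z : Fin n → Fin k)
    (E : (Fin n → Fin n → Bool) → Prop) : ℝ :=
  ∑ A : Fin n → Fin n → Bool, if ValidAdj A ∧ E A then edgeDensity ρ S z A else 0

/-- Conditional expectation of a function of the adjacency matrix, given labels `z`. -/
def condExp (ρ : ℝ) (S : Matrix (Fin k) (Fin k) ℝ) (z : Fin n → Fin k)
    (f : (Fin n → Fin n → Bool) → ℝ) : ℝ :=
  ∑ A : Fin n → Fin n → Bool, if ValidAdj A then edgeDensity ρ S z A * f A else 0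

/-- Probability of an event under the SBM: labels are i.i.d. `π`, edges are conditionally
independent Bernoulli(`ρ S (z i) (z j)`). -/
def sbmProb (π : Fin k → ℝ) (ρ : ℝ) (S : Matrix (Fin k) (Fin k) ℝ)
    (E : (Fin n → Fin k) → (Fin n → Fin n → Bool) → Prop) : ℝ :=
  ∑ z : Fin n → Fin k, (∏ i, π (z i)) * condProb ρ S z (E z)

/-- Number of disagreements between two label vectors. -/
def hamming (e z : Fin n → Fin k) : ℕ :=
  (Finset.univ.filter fun i => e i ≠ z i).card

/-- Misclassification distance: minimum number of disagreements over permutations of labels. -/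
def mDist (e z : Fin n → Fin k) : ℕ :=
  Finset.univ.inf' ⟨Equiv.refl (Fin k), Finset.mem_univ _⟩
    (fun σ : Equiv.Perm (Fin k) => (Finset.univ.filter fun i => e i ≠ σ (z i)).card)

/-- Confusion matrix `R(e,z)`. -/
def confusion (e z : Fin n → Fin k) : Matrix (Fin k) (Fin k) ℝ :=
  Matrix.of fun a b => (1 / (n : ℝ)) * ∑ i : Fin n, if e i = a ∧ z i = b then (1 : ℝ) else 0

/-- `[R 1]_a` : row sums. -/
def rowSum (R : Matrix (Fin k) (Fin k) ℝ) (a : Fin k) : ℝ := ∑ j, R a j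

/-- `[Rᵀ 1]_a` : column sums. -/
def colSum (R : Matrix (Fin k) (Fin k) ℝ) (a : Fin k) : ℝ := ∑ i, R i a

/-- `[P_R]_{ab}`. -/
def PR (P R : Matrix (Fin k) (Fin k) ℝ) (n : ℕ) (a b : Fin k) : ℝ :=
  ((R * P * R.transpose) a b - (if a = b then (∑ i, P i i * R a i) / n else 0)) /
    (rowSum R a * (rowSum R b - if a = b then 1 / (n : ℝ) else 0))

/-- The population modularity `H_{P,n}(R)`. -/
def Hmod (P R : Matrix (Fin k) (Fin k) ℝ) (n : ℕ) : ℝ :=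
  (1 / 2) * ∑ a : Fin k, ∑ b : Fin k,
    rowSum R a * (rowSum R b - if a = b then 1 / (n : ℝ) else 0) * tau (PR P R n a b)

/-- The centered modularity `X(e,z)` (with `P = ρ S`). -/
def Xfun (ρ : ℝ) (S : Matrix (Fin k) (Fin k) ℝ) (A : Fin n → Fin n → Bool)
    (e z : Fin n → Fin k) : ℝ :=
  (1 / (2 * (n : ℝ) ^ 2)) * ∑ a : Fin k, ∑ b : Fin k,
    nab e a b * (tau (oab A e a b / nab e a b) - tau (PR (ρ • S) (confusion e z) n a b))

/-- The limit functional `G_S(R)` (terms with `[RSRᵀ]_{ab} = 0` vanish). -/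
def GS (S R : Matrix (Fin k) (Fin k) ℝ) : ℝ :=
  ∑ a : Fin k, ∑ b : Fin k,
    (R * S * R.transpose) a b *
      Real.log ((R * S * R.transpose) a b / (rowSum R a * rowSum R b))

/-- Entry-wise `ℓ¹` norm of a matrix. -/
def l1norm (M : Matrix (Fin k) (Fin k) ℝ) : ℝ := ∑ a : Fin k, ∑ b : Fin k, |M a b|

/-- `s_max`. -/
def sMax (S : Matrix (Fin k) (Fin k) ℝ) : ℝ :=
  sSup (Set.range fun p : Fin k × Fin k => S p.1 p.2)

/-- `s_min`. -/
def sMin (S : Matrix (Fin k) (Fin k) ℝ) : ℝ :=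
  sInf (Set.range fun p : Fin k × Fin k => S p.1 p.2)

/-- `H_t(p‖q) = (1-t)p + tq - p^{1-t} q^t`. -/
def Ht (t p q : ℝ) : ℝ := (1 - t) * p + t * q - p ^ (1 - t) * q ^ t

/-- `max_{t ∈ [0,1]} Σ_a π_a H_t(S_{ab} ‖ S_{ab'})`. -/
def CtMax (π : Fin k → ℝ) (S : Matrix (Fin k) (Fin k) ℝ) (b b' : Fin k) : ℝ :=
  sSup ((fun t => ∑ a : Fin k, π a * Ht t (S a b) (S a b')) '' Set.Icc (0 : ℝ) 1)

/-- The phase-transition constant `C(π,S)`. -/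
def Cconst (π : Fin k → ℝ) (S : Matrix (Fin k) (Fin k) ℝ) : ℝ :=
  sInf {x : ℝ | ∃ b b' : Fin k, b ≠ b' ∧ x = CtMax π S b b'}

/-- `K_t(p‖q) = p^{1-t} q^t + t p log(p/q) - p`. -/
def Kt (t p q : ℝ) : ℝ := p ^ (1 - t) * q ^ t + t * p * Real.log (p / q) - p

/-- `K₁(p‖q) = p log(p/q) + q - p`. -/
def K1 (p q : ℝ) : ℝ := p * Real.log (p / q) + q - p

/-- Kullback–Leibler divergence between Bernoulli(s) and Bernoulli(t). -/
def KLBern (s t : ℝ) : ℝ := s * Real.log (s / t) + (1 - s) * Real.log ((1 - s) / (1 - t))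

/-- Off-diagonal pairs of labels. -/
def offDiag (k : ℕ) : Finset (Fin k × Fin k) :=
  Finset.univ.filter fun p => p.1 ≠ p.2

/-- `C_t(R,S) = Σ_a Σ_{b ≠ b'} [Rᵀ1]_a K_t(S_{ab}‖S_{ab'}) R_{b'b}`. -/
def CtRS (t : ℝ) (R S : Matrix (Fin k) (Fin k) ℝ) : ℝ :=
  ∑ a : Fin k, ∑ p ∈ offDiag k, colSum R a * Kt t (S a p.1) (S a p.2) * R p.2 p.1

/-- Membership in `F(n,α)`: all communities have size at least `α n`. -/
def inF (α : ℝ) (z : Fin n → Fin k) : Prop := ∀ a, α * n ≤ (nCount z a : ℝ)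

/-- `zh` is a maximizer of the ML modularity over `F(n,α)`. -/
def IsMLE (α : ℝ) (A : Fin n → Fin n → Bool) (zh : Fin n → Fin k) : Prop :=
  inF α zh ∧ ∀ e : Fin n → Fin k, inF α e → QML A e ≤ QML A zh

/-- `zh` is a maximizer of the ICL modularity over `F(n,α)`. -/
def IsICL (α : ℝ) (A : Fin n → Fin n → Bool) (zh : Fin n → Fin k) : Prop :=
  inF α zh ∧ ∀ e : Fin n → Fin k, inF α e → QICL A e ≤ QICL A zh

lemma key_le (s m : ℝ) (hs : 0 ≤ s) (hm : 0 < m) : s - m ≤ s * Real.log (s / m) := by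
  rcases hs.eq_or_lt with h | h
  · simp [← h]; linarith
  · have h0 : 0 < m / s := div_pos hm h
    have h1 := Real.log_le_sub_one_of_pos h0
    have h2 : Real.log (s / m) = - Real.log (m / s) := by
      rw [← Real.log_inv]; congr 1; field_simp
    rw [h2]
    have := mul_le_mul_of_nonneg_left h1 h.le
    rw [mul_sub, mul_div_cancel₀ m (ne_of_gt h)] at this
    nlinarith

lemma key_lt (s m : ℝ) (hs : 0 ≤ s) (hm : 0 < m) (hne : s ≠ m) :
    s - m < s * Real.log (s / m) := by
  rcases hs.eq_or_lt with h | h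
  · simp [← h]; linarith
  · have h0 : 0 < m / s := div_pos hm h
    have hms : m / s ≠ 1 := by
      intro hc
      exact hne ((div_eq_one_iff_eq (ne_of_gt h)).mp hc).symm
    have h1 := Real.log_lt_sub_one_of_pos h0 hms
    have h2 : Real.log (s / m) = - Real.log (m / s) := by
      rw [← Real.log_inv]; congr 1; field_simp
    rw [h2]
    have := mul_lt_mul_of_pos_left h1 h
    rw [mul_sub, mul_div_cancel₀ m (ne_of_gt h)] at this
    nlinarith

lemma hXexp {k : ℕ} (S R : Matrix (Fin k) (Fin k) ℝ) (a b : Fin k) :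
    (R * S * R.transpose) a b = ∑ p : Fin k × Fin k, R a p.1 * R b p.2 * S p.1 p.2 := by
  rw [Fintype.sum_prod_type, Finset.sum_comm]
  simp_rw [Matrix.mul_apply, Matrix.transpose_apply, Finset.sum_mul]
  congr 1; ext j; congr 1; ext i; ring

/-- the main per-block computation; strictness under a witness hypothesis. -/
lemma block_main {k : ℕ} (S R : Matrix (Fin k) (Fin k) ℝ) (hSpos : ∀ a b, 0 < S a b)
    (hR0 : ∀ a b, 0 ≤ R a b) (a b : Fin k) (hr1 : rowSum R a ≠ 0) (hr2 : rowSum R b ≠ 0)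
    (q : Fin k × Fin k) (hq : R a q.1 * R b q.2 ≠ 0)
    (hqne : S q.1 q.2 ≠ (R * S * R.transpose) a b / (rowSum R a * rowSum R b)) :
    (R * S * R.transpose) a b *
        Real.log ((R * S * R.transpose) a b / (rowSum R a * rowSum R b)) <
      ∑ p : Fin k × Fin k, R a p.1 * R b p.2 * (S p.1 p.2 * Real.log (S p.1 p.2)) := by
  have hX := hXexp S R a b
  have hr1p : 0 < rowSum R a := lt_of_le_of_ne (Finset.sum_nonneg fun j _ => hR0 a j) (Ne.symm hr1)
  have hr2p : 0 < rowSum R b := lt_of_le_of_ne (Finset.sum_nonneg fun j _ => hR0 b j) (Ne.symm hr2)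
  have hw0 : ∀ p : Fin k × Fin k, 0 ≤ R a p.1 * R b p.2 := fun p =>
    mul_nonneg (hR0 a p.1) (hR0 b p.2)
  have hwq : 0 < R a q.1 * R b q.2 := lt_of_le_of_ne (hw0 q) (Ne.symm hq)
  have hXpos : 0 < (R * S * R.transpose) a b := by
    rw [hX]
    apply Finset.sum_pos' (fun p _ => mul_nonneg (hw0 p) (hSpos p.1 p.2).le)
    exact ⟨q, mem_univ q, mul_pos hwq (hSpos q.1 q.2)⟩
  set X := (R * S * R.transpose) a b with hXdef
  set m := X / (rowSum R a * rowSum R b) with hmdef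
  have hmpos : 0 < m := div_pos hXpos (mul_pos hr1p hr2p)
  -- sum of weights
  have hwsum : ∑ p : Fin k × Fin k, R a p.1 * R b p.2 = rowSum R a * rowSum R b := by
    rw [Fintype.sum_prod_type, rowSum, rowSum, Finset.sum_mul]
    exact Finset.sum_congr rfl fun i _ => by rw [Finset.mul_sum]
  -- key step: strict sum inequality
  have hterm : ∀ p ∈ (univ : Finset (Fin k × Fin k)),
      R a p.1 * R b p.2 * (S p.1 p.2 - m) ≤
        R a p.1 * R b p.2 * (S p.1 p.2 * Real.log (S p.1 p.2 / m)) := fun p _ =>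
    mul_le_mul_of_nonneg_left (key_le _ _ (hSpos p.1 p.2).le hmpos) (hw0 p)
  have hstrict : ∑ p : Fin k × Fin k, R a p.1 * R b p.2 * (S p.1 p.2 - m) <
      ∑ p : Fin k × Fin k, R a p.1 * R b p.2 * (S p.1 p.2 * Real.log (S p.1 p.2 / m)) := by
    apply Finset.sum_lt_sum hterm
    exact ⟨q, mem_univ q,
      mul_lt_mul_of_pos_left (key_lt _ _ (hSpos q.1 q.2).le hmpos hqne) hwq⟩
  -- LHS of hstrict is zero
  have hzero : ∑ p : Fin k × Fin k, R a p.1 * R b p.2 * (S p.1 p.2 - m) = 0 := by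
    have : ∑ p : Fin k × Fin k, R a p.1 * R b p.2 * (S p.1 p.2 - m)
        = (∑ p : Fin k × Fin k, R a p.1 * R b p.2 * S p.1 p.2)
          - (∑ p : Fin k × Fin k, R a p.1 * R b p.2) * m := by
      rw [Finset.sum_mul, ← Finset.sum_sub_distrib]
      exact Finset.sum_congr rfl fun p _ => by ring
    rw [this, hwsum, ← hX, hmdef]
    field_simp
    ring
  -- rewrite RHS of hstrict
  have hlogsplit : ∀ p : Fin k × Fin k,
      R a p.1 * R b p.2 * (S p.1 p.2 * Real.log (S p.1 p.2 / m)) =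
        R a p.1 * R b p.2 * (S p.1 p.2 * Real.log (S p.1 p.2))
          - R a p.1 * R b p.2 * S p.1 p.2 * Real.log m := fun p => by
    rw [Real.log_div (ne_of_gt (hSpos p.1 p.2)) (ne_of_gt hmpos)]; ring
  have hsplit : ∑ p : Fin k × Fin k, R a p.1 * R b p.2 * (S p.1 p.2 * Real.log (S p.1 p.2 / m))
      = (∑ p : Fin k × Fin k, R a p.1 * R b p.2 * (S p.1 p.2 * Real.log (S p.1 p.2)))
        - X * Real.log m := by
    simp_rw [hlogsplit]
    rw [Finset.sum_sub_distrib, ← Finset.sum_mul, ← hX]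
  rw [hzero, hsplit] at hstrict
  linarith

lemma block_le {k : ℕ} (S R : Matrix (Fin k) (Fin k) ℝ) (hSpos : ∀ a b, 0 < S a b)
    (hR0 : ∀ a b, 0 ≤ R a b) (a b : Fin k) :
    (R * S * R.transpose) a b *
        Real.log ((R * S * R.transpose) a b / (rowSum R a * rowSum R b)) ≤
      ∑ p : Fin k × Fin k, R a p.1 * R b p.2 * (S p.1 p.2 * Real.log (S p.1 p.2)) := by
  have hX := hXexp S R a b
  by_cases hr1 : rowSum R a = 0
  · have hz : ∀ i, R a i = 0 := fun i =>
      (Finset.sum_eq_zero_iff_of_nonneg (fun j _ => hR0 a j)).mp hr1 i (mem_univ i)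
    have hX0 : (R * S * R.transpose) a b = 0 := by
      rw [hX]; exact Finset.sum_eq_zero fun p _ => by rw [hz p.1]; ring
    rw [hX0]
    simp
    exact Finset.sum_nonneg fun p _ => le_of_eq (by rw [hz p.1]; ring)
  by_cases hr2 : rowSum R b = 0
  · have hz : ∀ i, R b i = 0 := fun i =>
      (Finset.sum_eq_zero_iff_of_nonneg (fun j _ => hR0 b j)).mp hr2 i (mem_univ i)
    have hX0 : (R * S * R.transpose) a b = 0 := by
      rw [hX]; exact Finset.sum_eq_zero fun p _ => by rw [hz p.2]; ring
    rw [hX0]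
    simp
    exact Finset.sum_nonneg fun p _ => le_of_eq (by rw [hz p.2]; ring)
  -- main case: mimic block_main but non-strict
  have hr1p : 0 < rowSum R a := lt_of_le_of_ne (Finset.sum_nonneg fun j _ => hR0 a j) (Ne.symm hr1)
  have hr2p : 0 < rowSum R b := lt_of_le_of_ne (Finset.sum_nonneg fun j _ => hR0 b j) (Ne.symm hr2)
  have hw0 : ∀ p : Fin k × Fin k, 0 ≤ R a p.1 * R b p.2 := fun p =>
    mul_nonneg (hR0 a p.1) (hR0 b p.2)
  have hXnn : 0 ≤ (R * S * R.transpose) a b := by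
    rw [hX]
    exact Finset.sum_nonneg fun p _ => mul_nonneg (hw0 p) (hSpos p.1 p.2).le
  rcases hXnn.eq_or_lt with hX0 | hXpos
  · have hwz : ∀ p : Fin k × Fin k, R a p.1 * R b p.2 = 0 := by
      intro p
      have h0 := (Finset.sum_eq_zero_iff_of_nonneg
        (fun p (_ : p ∈ (univ : Finset (Fin k × Fin k))) =>
          mul_nonneg (hw0 p) (hSpos p.1 p.2).le)).mp (by rw [← hX]; exact hX0.symm) p (mem_univ p)
      rcases mul_eq_zero.mp h0 with h | h
      · exact h
      · exact absurd h (ne_of_gt (hSpos p.1 p.2))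
    rw [← hX0]
    simp
    exact Finset.sum_nonneg fun p _ => le_of_eq (by rw [hwz p]; ring)
  · set X := (R * S * R.transpose) a b with hXdef
    set m := X / (rowSum R a * rowSum R b) with hmdef
    have hmpos : 0 < m := div_pos hXpos (mul_pos hr1p hr2p)
    have hwsum : ∑ p : Fin k × Fin k, R a p.1 * R b p.2 = rowSum R a * rowSum R b := by
      rw [Fintype.sum_prod_type, rowSum, rowSum, Finset.sum_mul]
      exact Finset.sum_congr rfl fun i _ => by rw [Finset.mul_sum]
    have hterm : ∀ p ∈ (univ : Finset (Fin k × Fin k)),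
        R a p.1 * R b p.2 * (S p.1 p.2 - m) ≤
          R a p.1 * R b p.2 * (S p.1 p.2 * Real.log (S p.1 p.2 / m)) := fun p _ =>
      mul_le_mul_of_nonneg_left (key_le _ _ (hSpos p.1 p.2).le hmpos) (hw0 p)
    have hstrict := Finset.sum_le_sum hterm
    have hzero : ∑ p : Fin k × Fin k, R a p.1 * R b p.2 * (S p.1 p.2 - m) = 0 := by
      have : ∑ p : Fin k × Fin k, R a p.1 * R b p.2 * (S p.1 p.2 - m)
          = (∑ p : Fin k × Fin k, R a p.1 * R b p.2 * S p.1 p.2)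
            - (∑ p : Fin k × Fin k, R a p.1 * R b p.2) * m := by
        rw [Finset.sum_mul, ← Finset.sum_sub_distrib]
        exact Finset.sum_congr rfl fun p _ => by ring
      rw [this, hwsum, ← hX, hmdef]
      field_simp
      ring
    have hlogsplit : ∀ p : Fin k × Fin k,
        R a p.1 * R b p.2 * (S p.1 p.2 * Real.log (S p.1 p.2 / m)) =
          R a p.1 * R b p.2 * (S p.1 p.2 * Real.log (S p.1 p.2))
            - R a p.1 * R b p.2 * S p.1 p.2 * Real.log m := fun p => by
      rw [Real.log_div (ne_of_gt (hSpos p.1 p.2)) (ne_of_gt hmpos)]; ring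
    have hsplit : ∑ p : Fin k × Fin k, R a p.1 * R b p.2 * (S p.1 p.2 * Real.log (S p.1 p.2 / m))
        = (∑ p : Fin k × Fin k, R a p.1 * R b p.2 * (S p.1 p.2 * Real.log (S p.1 p.2)))
          - X * Real.log m := by
      simp_rw [hlogsplit]
      rw [Finset.sum_sub_distrib, ← Finset.sum_mul, ← hX]
    rw [hzero, hsplit] at hstrict
    linarith

lemma sum4_swap {k : ℕ} (f : Fin k → Fin k → Fin k → Fin k → ℝ) :
    ∑ i : Fin k, ∑ j : Fin k, ∑ a : Fin k, ∑ b : Fin k, f i j a b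
      = ∑ a : Fin k, ∑ b : Fin k, ∑ i : Fin k, ∑ j : Fin k, f i j a b := by
  calc ∑ i : Fin k, ∑ j : Fin k, ∑ a : Fin k, ∑ b : Fin k, f i j a b
      = ∑ i : Fin k, ∑ a : Fin k, ∑ j : Fin k, ∑ b : Fin k, f i j a b :=
        Finset.sum_congr rfl fun i _ => Finset.sum_comm
    _ = ∑ a : Fin k, ∑ i : Fin k, ∑ j : Fin k, ∑ b : Fin k, f i j a b := Finset.sum_comm
    _ = ∑ a : Fin k, ∑ i : Fin k, ∑ b : Fin k, ∑ j : Fin k, f i j a b :=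
        Finset.sum_congr rfl fun a _ => Finset.sum_congr rfl fun i _ => Finset.sum_comm
    _ = ∑ a : Fin k, ∑ b : Fin k, ∑ i : Fin k, ∑ j : Fin k, f i j a b :=
        Finset.sum_congr rfl fun a _ => Finset.sum_comm

/-- strict positivity of the population criterion gap. -/
theorem stmt9 (k : ℕ) (S : Matrix (Fin k) (Fin k) ℝ) (hSsym : S.IsSymm)
    (hSpos : ∀ a b, 0 < S a b)
    (hcols : ∀ b b' : Fin k, b ≠ b' → ∃ a, S a b ≠ S a b')
    (R : Matrix (Fin k) (Fin k) ℝ) (hR0 : ∀ a b, 0 ≤ R a b)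
    (hRsum : ∑ a : Fin k, ∑ b : Fin k, R a b = 1)
    (hcolnz : ∀ b, ∃ a, R a b ≠ 0)
    (hnotdiag : ∀ σ : Equiv.Perm (Fin k), ∃ a b, a ≠ b ∧ R (σ a) b ≠ 0) :
    0 < GS S (Matrix.diagonal fun a => colSum R a) - GS S R := by
  classical
  have hc : ∀ i, 0 < colSum R i := by
    intro i
    obtain ⟨a, ha⟩ := hcolnz i
    have hle : R a i ≤ colSum R i :=
      Finset.single_le_sum (fun b (_ : b ∈ Finset.univ) => hR0 b i) (Finset.mem_univ a)
    exact lt_of_lt_of_le (lt_of_le_of_ne (hR0 a i) (Ne.symm ha)) hle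
  -- abbreviation for block right-hand sides
  set T : Fin k → Fin k → ℝ := fun a b =>
    ∑ p : Fin k × Fin k, R a p.1 * R b p.2 * (S p.1 p.2 * Real.log (S p.1 p.2)) with hT
  -- Step 1: GS of the diagonal matrix
  have hGSD : GS S (Matrix.diagonal fun a => colSum R a)
      = ∑ i : Fin k, ∑ j : Fin k, colSum R i * colSum R j * (S i j * Real.log (S i j)) := by
    unfold GS
    refine Finset.sum_congr rfl fun i _ => Finset.sum_congr rfl fun j _ => ?_
    have h1 : ((Matrix.diagonal fun a => colSum R a) * S *
        (Matrix.diagonal fun a => colSum R a).transpose) i j = colSum R i * S i j * colSum R j := by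
      rw [Matrix.diagonal_transpose, Matrix.mul_diagonal, Matrix.diagonal_mul]
    have h2 : ∀ a : Fin k, rowSum (Matrix.diagonal fun a => colSum R a) a = colSum R a := by
      intro a
      unfold rowSum
      simp [Matrix.diagonal_apply]
    rw [h1, h2, h2]
    have h3 : colSum R i * S i j * colSum R j / (colSum R i * colSum R j) = S i j := by
      rw [show colSum R i * S i j * colSum R j = S i j * (colSum R i * colSum R j) by ring]
      exact mul_div_cancel_right₀ _ (mul_pos (hc i) (hc j)).ne'
    rw [h3]
    ring
  -- Step 2: expand the diagonal GS as a sum of block RHS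
  have hGSD2 : GS S (Matrix.diagonal fun a => colSum R a) = ∑ a : Fin k, ∑ b : Fin k, T a b := by
    rw [hGSD]
    have hexp : ∀ i j : Fin k, colSum R i * colSum R j * (S i j * Real.log (S i j))
        = ∑ a : Fin k, ∑ b : Fin k, R a i * R b j * (S i j * Real.log (S i j)) := by
      intro i j
      calc colSum R i * colSum R j * (S i j * Real.log (S i j))
          = (∑ a : Fin k, ∑ b : Fin k, R a i * R b j) * (S i j * Real.log (S i j)) := by
            rw [colSum, colSum, Finset.sum_mul_sum]
        _ = ∑ a : Fin k, ∑ b : Fin k, R a i * R b j * (S i j * Real.log (S i j)) := by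
            rw [Finset.sum_mul]
            exact Finset.sum_congr rfl fun a _ => Finset.sum_mul _ _ _
    simp_rw [hexp]
    rw [sum4_swap]
    refine Finset.sum_congr rfl fun a _ => Finset.sum_congr rfl fun b _ => ?_
    simp only [hT]
    rw [Fintype.sum_prod_type]
  -- Step 3: GS S R is the sum of block LHS (by definition)
  have hGSR : GS S R = ∑ a : Fin k, ∑ b : Fin k,
      (R * S * R.transpose) a b *
        Real.log ((R * S * R.transpose) a b / (rowSum R a * rowSum R b)) := rfl
  rw [hGSD2, hGSR]
  -- Step 4: find a strict block
  have hwitness : ∃ a b : Fin k, ∃ q : Fin k × Fin k, R a q.1 * R b q.2 ≠ 0 ∧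
      S q.1 q.2 ≠ (R * S * R.transpose) a b / (rowSum R a * rowSum R b) := by
    by_cases hrow2 : ∃ a j j' : Fin k, j ≠ j' ∧ R a j ≠ 0 ∧ R a j' ≠ 0
    · obtain ⟨a, j, j', hjj, hj, hj'⟩ := hrow2
      obtain ⟨i, hS⟩ := hcols j j' hjj
      obtain ⟨b, hbi⟩ := hcolnz i
      set m := (R * S * R.transpose) b a / (rowSum R b * rowSum R a) with hm
      by_cases hq : S i j = m
      · exact ⟨b, a, (i, j'), by
          simp only []
          exact mul_ne_zero hbi hj', by
          simp only []
          rw [← hm]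
          intro hcon
          exact hS (by rw [hq, hcon])⟩
      · exact ⟨b, a, (i, j), ⟨mul_ne_zero hbi hj, by simp only []; rw [← hm]; exact hq⟩⟩
    · exfalso
      push_neg at hrow2
      set σ0 : Fin k → Fin k := fun i => (hcolnz i).choose with hσ0
      have hspec : ∀ i, R (σ0 i) i ≠ 0 := fun i => (hcolnz i).choose_spec
      have hinj : Function.Injective σ0 := by
        intro i i' hii
        by_contra hne
        have h1 : R (σ0 i) i ≠ 0 := hspec i
        have h2 : R (σ0 i) i' ≠ 0 := by rw [hii]; exact hspec i'
        exact h2 (hrow2 (σ0 i) i i' hne h1)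
      let σ : Equiv.Perm (Fin k) := Equiv.ofBijective σ0 (Finite.injective_iff_bijective.mp hinj)
      obtain ⟨a, b, hab, hRab⟩ := hnotdiag σ
      have hσ : σ a = σ0 a := rfl
      have h1 : R (σ a) a ≠ 0 := by rw [hσ]; exact hspec a
      exact hRab (hrow2 (σ a) a b hab h1)
  obtain ⟨a0, b0, q0, hq0, hq0ne⟩ := hwitness
  have hr1 : rowSum R a0 ≠ 0 := by
    have h : R a0 q0.1 ≠ 0 := fun h => hq0 (by rw [h]; ring)
    intro hz
    exact h ((Finset.sum_eq_zero_iff_of_nonneg (fun j _ => hR0 a0 j)).mp hz q0.1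
      (Finset.mem_univ _))
  have hr2 : rowSum R b0 ≠ 0 := by
    have h : R b0 q0.2 ≠ 0 := fun h => hq0 (by rw [h]; ring)
    intro hz
    exact h ((Finset.sum_eq_zero_iff_of_nonneg (fun j _ => hR0 b0 j)).mp hz q0.2
      (Finset.mem_univ _))
  have hlt : ∑ a : Fin k, ∑ b : Fin k,
      (R * S * R.transpose) a b *
        Real.log ((R * S * R.transpose) a b / (rowSum R a * rowSum R b))
      < ∑ a : Fin k, ∑ b : Fin k, T a b := by
    refine Finset.sum_lt_sum (fun a _ => Finset.sum_le_sum fun b _ => ?_) ⟨a0, Finset.mem_univ a0, ?_⟩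
    · exact block_le S R hSpos hR0 a b
    · refine Finset.sum_lt_sum (fun b _ => block_le S R hSpos hR0 a0 b)
        ⟨b0, Finset.mem_univ b0, ?_⟩
      exact block_main S R hSpos hR0 a0 b0 hr1 hr2 q0 hq0 hq0ne
  linarith
end SBM
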